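/- Let ξ̂_1, ξ̂_2, … be i.i.d. Ξ-valued random variables with distribution P^c ∈ Δ_J, and let P̂_N and r̂_N be the Bayesian center and radii constructed from the first N samples. Then the Bayesian box ambiguity set converges to the singleton {P^c} in Hausdorff distance: H(𝔓(P̂_N, r̂_N), 𝔓(P^c, 0); ‖·‖_∞) → 0 almost surely as N → ∞. -/

import Mathlib

open Filter Topology MeasureTheory ProbabilityTheory

noncomputable section

/-- Number of observations among the first `N` samples equal to the `j`-th support point. -/
def sampleCount {Ω : Type*} {J : ℕ} (X : ℕ → Ω → Fin J) (j : Fin J) (N : ℕ) (ω : Ω) : ℕ :=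
  ((Finset.range N).filter (fun i => X i ω = j)).card

/-- Bayesian reference probability `p̂_{j,N} = (τ_{j,0} - 1 + Σ_{i<N} 1{ξ̂_i = ξ^j}) / (Σ_k τ_{k,0} - J + N)`. -/
def bayesCenter {Ω : Type*} {J : ℕ} (τ0 : Fin J → ℝ) (X : ℕ → Ω → Fin J)
    (N : ℕ) (ω : Ω) (j : Fin J) : ℝ :=
  (τ0 j - 1 + (sampleCount X j N ω : ℝ)) / (∑ k, τ0 k - J + N)

/-- Bayesian radius `r̂_{j,N} = z · sqrt( p̂_{j,N}(1 - p̂_{j,N}) / (Σ_k τ_{k,N} - J) )`. -/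
def bayesRadius {Ω : Type*} {J : ℕ} (τ0 : Fin J → ℝ) (z : ℝ) (X : ℕ → Ω → Fin J)
    (N : ℕ) (ω : Ω) (j : Fin J) : ℝ :=
  z * Real.sqrt (bayesCenter τ0 X N ω j * (1 - bayesCenter τ0 X N ω j) / (∑ k, τ0 k - J + N))

/-- Box-type ambiguity set `𝔓(P,r) = {Q ∈ Δ_J : P_j - r_j ≤ Q_j ≤ P_j + r_j ∀ j}`. -/
def boxSet (J : ℕ) (P r : Fin J → ℝ) : Set (Fin J → ℝ) :=
  {Q | Q ∈ stdSimplex ℝ (Fin J) ∧ ∀ j, P j - r j ≤ Q j ∧ Q j ≤ P j + r j}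

lemma boxSet_zero {J : ℕ} (Pc : Fin J → ℝ) (hPc : Pc ∈ stdSimplex ℝ (Fin J)) :
    boxSet J Pc (fun _ => 0) = {Pc} := by
  ext Q
  constructor
  · rintro ⟨-, h⟩
    have : Q = Pc := funext fun j => le_antisymm (by simpa using (h j).2) (by simpa using (h j).1)
    exact this
  · rintro rfl
    exact ⟨hPc, fun j => ⟨by simp, by simp⟩⟩

lemma sampleCount_sum {Ω : Type*} {J : ℕ} (X : ℕ → Ω → Fin J) (N : ℕ) (ω : Ω) :
    ∑ j, (sampleCount X j N ω : ℝ) = N := by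
  have : ∑ j, sampleCount X j N ω = N := by
    unfold sampleCount
    have := Finset.card_eq_sum_card_fiberwise (s := Finset.range N) (t := Finset.univ)
      (f := fun i => X i ω) (fun i _ => Finset.mem_univ _)
    rw [Finset.card_range] at this
    exact this.symm
  exact_mod_cast this

-- Center is in the simplex (given sum of τ0 condition).
lemma bayesCenter_mem {Ω : Type*} {J : ℕ} (τ0 : Fin J → ℝ) (hτ0 : ∀ j, 1 < τ0 j)
    (hc : 0 < ∑ k, τ0 k - J) (X : ℕ → Ω → Fin J) (N : ℕ) (ω : Ω) :
    bayesCenter τ0 X N ω ∈ stdSimplex ℝ (Fin J) := by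
  have hden : (0:ℝ) < ∑ k, τ0 k - J + N := by positivity
  constructor
  · intro j
    apply div_nonneg _ hden.le
    have := hτ0 j
    have : (0:ℝ) ≤ (sampleCount X j N ω : ℝ) := Nat.cast_nonneg _
    linarith [hτ0 j]
  · unfold bayesCenter
    rw [← Finset.sum_div, div_eq_one_iff_eq hden.ne']
    rw [Finset.sum_add_distrib, sampleCount_sum, Finset.sum_sub_distrib]
    simp [Finset.card_univ]

/-- the Bayesian box ambiguity set converges almost surely to the
singleton `𝔓(P^c, 0) = {P^c}` in the Hausdorff distance for the ℓ∞ metric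
(which is the default metric on `Fin J → ℝ`). -/
theorem bayes_boxSet_hausdorff_tendsto_ae
    {Ω : Type*} [MeasurableSpace Ω] (μ : Measure Ω) [IsProbabilityMeasure μ]
    (J k : ℕ) (hJ : 2 ≤ J)
    (ξ : Fin J → Fin k → ℝ) (hξ : Function.Injective ξ)
    (Pc : Fin J → ℝ) (hPc : Pc ∈ stdSimplex ℝ (Fin J))
    (X : ℕ → Ω → Fin J) (hmeas : ∀ i, Measurable (X i))
    (hindep : iIndepFun X μ)
    (hident : ∀ i j, μ {ω | X i ω = j} = ENNReal.ofReal (Pc j))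
    (τ0 : Fin J → ℝ) (hτ0 : ∀ j, 1 < τ0 j)
    (z : ℝ) (hz : 0 < z) :
    ∀ᵐ ω ∂μ,
      Tendsto
        (fun N =>
          Metric.hausdorffDist
            (boxSet J (bayesCenter τ0 X N ω) (bayesRadius τ0 z X N ω))
            (boxSet J Pc (fun _ => 0)))
        atTop (𝓝 0) := by
  haveI : NeZero J := ⟨by omega⟩
  set c : ℝ := ∑ k, τ0 k - J with hc_def
  have hc : 0 < c := by
    have h1 : (J:ℝ) = ∑ _k : Fin J, (1:ℝ) := by simp
    have h2 : ∑ _k : Fin J, (1:ℝ) < ∑ k, τ0 k :=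
      Finset.sum_lt_sum_of_nonempty Finset.univ_nonempty (fun j _ => hτ0 j)
    simp only [hc_def]
    linarith
  -- identical distribution of the X i
  have hid : ∀ i, IdentDistrib (X i) (X 0) μ μ := by
    intro i
    refine ⟨(hmeas i).aemeasurable, (hmeas 0).aemeasurable, ?_⟩
    apply MeasureTheory.Measure.ext_of_singleton
    intro a
    rw [Measure.map_apply (hmeas i) (measurableSet_singleton a),
        Measure.map_apply (hmeas 0) (measurableSet_singleton a)]
    show μ {ω | X i ω = a} = μ {ω | X 0 ω = a}
    rw [hident i a, hident 0 a]
  -- strong law for each coordinate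
  have hSLLN : ∀ᵐ ω ∂μ, ∀ j : Fin J,
      Tendsto (fun N : ℕ => (sampleCount X j N ω : ℝ) / N) atTop (𝓝 (Pc j)) := by
    rw [ae_all_iff]
    intro j
    set f : Fin J → ℝ := fun a => if a = j then 1 else 0 with hf
    have hfm : Measurable f := measurable_of_countable f
    set Y : ℕ → Ω → ℝ := fun i ω => f (X i ω) with hY
    have hYm : ∀ i, Measurable (Y i) := fun i => hfm.comp (hmeas i)
    have hint : Integrable (Y 0) μ := by
      refine (integrable_const (1:ℝ)).mono' (hYm 0).aestronglyMeasurable ?_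
      filter_upwards with ω
      simp only [hY, hf]
      split <;> simp
    have hYindep : Pairwise (Function.onFun (IndepFun · · μ) Y) := fun i i' hii' =>
      (hindep.indepFun hii').comp hfm hfm
    have hYident : ∀ i, IdentDistrib (Y i) (Y 0) μ μ := fun i => (hid i).comp hfm
    have hEY : μ[Y 0] = Pc j := by
      have hs : MeasurableSet {ω | X 0 ω = j} := (hmeas 0) (measurableSet_singleton j)
      have : Y 0 = ({ω | X 0 ω = j} : Set Ω).indicator (fun _ => (1:ℝ)) := by
        funext ω
        simp only [hY, hf, Set.indicator_apply, Set.mem_setOf_eq]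
      rw [this, integral_indicator_const _ hs, Measure.real, hident 0 j]
      simp [ENNReal.toReal_ofReal (hPc.1 j)]
    have := strong_law_ae_real Y hint hYindep hYident
    rw [hEY] at this
    filter_upwards [this] with ω hω
    convert hω using 2 with N
    simp only [hY, hf, sampleCount]
    rw [Finset.sum_boole]
  filter_upwards [hSLLN] with ω hω
  -- center tendsto
  have hcenter : ∀ j, Tendsto (fun N : ℕ => bayesCenter τ0 X N ω j) atTop (𝓝 (Pc j)) := by
    intro j
    have hnum : Tendsto (fun N : ℕ => (τ0 j - 1) / N + (sampleCount X j N ω : ℝ) / N)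
        atTop (𝓝 (0 + Pc j)) :=
      (tendsto_const_div_atTop_nhds_zero_nat _).add (hω j)
    have hden : Tendsto (fun N : ℕ => c / N + 1) atTop (𝓝 (0 + 1)) :=
      (tendsto_const_div_atTop_nhds_zero_nat _).add tendsto_const_nhds
    have := hnum.div hden (by norm_num)
    rw [show (0 + Pc j) / (0 + 1) = Pc j by norm_num] at this
    apply this.congr'
    filter_upwards [eventually_gt_atTop 0] with N hN
    have hN' : (N:ℝ) ≠ 0 := Nat.cast_ne_zero.2 hN.ne'
    unfold bayesCenter
    rw [← hc_def]
    simp only [Pi.div_apply]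
    field_simp
  have hcen : Tendsto (fun N : ℕ => (bayesCenter τ0 X N ω : Fin J → ℝ)) atTop (𝓝 Pc) :=
    tendsto_pi_nhds.2 hcenter
  have hD : Tendsto (fun N : ℕ => dist (bayesCenter τ0 X N ω) Pc) atTop (𝓝 0) :=
    tendsto_iff_dist_tendsto_zero.1 hcen
  -- uniform radius bound
  set R : ℕ → ℝ := fun N => z * Real.sqrt (1 / (4 * (c + N))) with hR
  have hdenpos : ∀ N : ℕ, (0:ℝ) < c + N := fun N => by positivity
  have hRnonneg : ∀ N, 0 ≤ R N := fun N => by positivity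
  have hrad : ∀ N j, bayesRadius τ0 z X N ω j ≤ R N := by
    intro N j
    unfold bayesRadius
    rw [← hc_def]
    apply mul_le_mul_of_nonneg_left _ hz.le
    apply Real.sqrt_le_sqrt
    rw [div_le_div_iff₀ (hdenpos N) (by positivity)]
    set p := bayesCenter τ0 X N ω j
    nlinarith [sq_nonneg (p - 1/2), (hdenpos N)]
  have hradnonneg : ∀ N j, 0 ≤ bayesRadius τ0 z X N ω j := by
    intro N j
    exact mul_nonneg hz.le (Real.sqrt_nonneg _)
  have hRlim : Tendsto R atTop (𝓝 0) := by
    have h1 : Tendsto (fun N : ℕ => (1:ℝ) / (4 * (c + N))) atTop (𝓝 0) := by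
      simp only [one_div]
      apply Tendsto.comp tendsto_inv_atTop_zero
      apply Tendsto.const_mul_atTop (by norm_num : (0:ℝ) < 4)
      apply tendsto_atTop_add_const_left
      exact tendsto_natCast_atTop_atTop
    have h2 := ((Real.continuous_sqrt.tendsto 0).comp h1).const_mul z
    rw [Real.sqrt_zero, mul_zero] at h2
    exact h2
  -- final squeeze
  have key : ∀ N, Metric.hausdorffDist
      (boxSet J (bayesCenter τ0 X N ω) (bayesRadius τ0 z X N ω))
      (boxSet J Pc (fun _ => 0)) ≤ dist (bayesCenter τ0 X N ω) Pc + R N := by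
    intro N
    set P := bayesCenter τ0 X N ω with hP
    set r := bayesRadius τ0 z X N ω
    have hDN : 0 ≤ dist P Pc := dist_nonneg
    have hbound : (0:ℝ) ≤ dist P Pc + R N := by linarith [hRnonneg N]
    rw [boxSet_zero Pc hPc]
    apply Metric.hausdorffDist_le_of_mem_dist hbound
    · intro Q hQ
      refine ⟨Pc, rfl, ?_⟩
      rw [dist_pi_le_iff hbound]
      intro j
      have h1 : |Q j - P j| ≤ r j := abs_sub_le_iff.2 ⟨by linarith [(hQ.2 j).2],
        by linarith [(hQ.2 j).1]⟩
      have h2 : dist (P j) (Pc j) ≤ dist P Pc := dist_le_pi_dist P Pc j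
      rw [Real.dist_eq] at h2 ⊢
      calc |Q j - Pc j| ≤ |Q j - P j| + |P j - Pc j| := abs_sub_le _ _ _
        _ ≤ r j + dist P Pc := add_le_add h1 h2
        _ ≤ R N + dist P Pc := by linarith [hrad N j]
        _ = dist P Pc + R N := by ring
    · intro x hx
      rw [Set.mem_singleton_iff] at hx
      subst hx
      refine ⟨P, ⟨bayesCenter_mem τ0 hτ0 hc X N ω, fun j => ?_⟩, ?_⟩
      · constructor <;> [linarith [hradnonneg N j]; linarith [hradnonneg N j]]
      · rw [dist_comm]
        linarith [hRnonneg N]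
  apply squeeze_zero (fun N => Metric.hausdorffDist_nonneg) key
  simpa using hD.add hRlim

end
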